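/- Let X be a finite nonempty set, Y a countable set, and D a probability distribution on Y. Let O : X → Y be a random function whose values O(x), x ∈ X, are independent and each distributed according to D. Let y₁ be distributed according to D independently of O, and let y₂ := O(x) for x chosen uniformly from X independently of O. Then SD((O, y₁); (O, y₂)) ≤ (1/(2√|X|)) · 2^{H_{1/2}(D)/2}, where H_{1/2}(D) := 2·log₂(Σ_{y∈Y} √(D(y))) is the Rényi entropy of order 1/2 of D. In particular, if Y is finite, SD((O, y₁); (O, y₂)) ≤ (1/2)·√(|Y|/|X|). -/

import Mathlib

open scoped Classical

set_option maxHeartbeats 1000000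

lemma hasSum_pi_fin {Y : Type*} : ∀ (n : ℕ) (g : Fin n → Y → ℝ),
    (∀ i y, 0 ≤ g i y) → (∀ i, Summable (g i)) →
    HasSum (fun f : Fin n → Y => ∏ i, g i (f i)) (∏ i, ∑' y, g i y) := by
  intro n
  induction n with
  | zero =>
      intro g h0 hs
      simpa using hasSum_single (f := fun _ : Fin 0 → Y => (1:ℝ)) (Fin.elim0)
        (fun f' hf' => absurd (Subsingleton.elim _ _) hf')
  | succ n ih =>
      intro g h0 hs
      have ih' := ih (fun i => g i.succ) (fun i y => h0 _ y) (fun i => hs _)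
      have h1 : Summable fun y => ‖g 0 y‖ := by
        simpa [Real.norm_eq_abs, abs_of_nonneg (h0 0 _)] using hs 0
      have h2 : Summable fun f : Fin n → Y => ‖∏ i, g i.succ (f i)‖ :=
        ih'.summable.abs.congr fun f => (Real.norm_eq_abs _).symm
      have ih'' : HasSum (fun f : Fin n → Y => ∏ i : Fin n, g (Fin.succ i) (f i))
          (∏ i : Fin n, ∑' y, g (Fin.succ i) y) := ih'
      have hsumm := summable_mul_of_summable_norm (f := g 0)
        (g := fun f : Fin n → Y => ∏ i : Fin n, g (Fin.succ i) (f i)) h1 h2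
      have hmul : HasSum (fun p : Y × (Fin n → Y) => g 0 p.1 * ∏ i : Fin n, g (Fin.succ i) (p.2 i))
          ((∑' y, g 0 y) * ∏ i : Fin n, ∑' y, g (Fin.succ i) y) :=
        HasSum.mul (f := g 0)
          (g := fun f : Fin n → Y => ∏ i : Fin n, g (Fin.succ i) (f i)) (hs 0).hasSum ih'' hsumm
      rw [← Equiv.hasSum_iff (Fin.consEquiv (fun _ : Fin (n+1) => Y))]
      have hfun : ((fun f : Fin (n+1) → Y => ∏ i, g i (f i)) ∘ (Fin.consEquiv (fun _ : Fin (n+1) => Y))) =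
          fun p : Y × (Fin n → Y) => g 0 p.1 * ∏ i : Fin n, g (Fin.succ i) (p.2 i) := by
        funext p
        simp [Fin.prod_univ_succ, Fin.consEquiv]
      rw [hfun, Fin.prod_univ_succ]
      exact hmul

lemma hasSum_pi {X Y : Type*} [Fintype X] (g : X → Y → ℝ)
    (h0 : ∀ x y, 0 ≤ g x y) (hs : ∀ x, Summable (g x)) :
    HasSum (fun f : X → Y => ∏ x, g x (f x)) (∏ x, ∑' y, g x y) := by
  classical
  have e := Fintype.equivFin X
  have key := hasSum_pi_fin (Fintype.card X) (fun i => g (e.symm i))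
    (fun i y => h0 _ y) (fun i => hs _)
  rw [← Equiv.hasSum_iff (Equiv.arrowCongr e.symm (Equiv.refl Y))]
  have hfun : ((fun f : X → Y => ∏ x, g x (f x)) ∘ (Equiv.arrowCongr e.symm (Equiv.refl Y))) =
      fun f : Fin (Fintype.card X) → Y => ∏ i, g (e.symm i) (f i) := by
    funext f
    exact Fintype.prod_equiv e _ _ fun x => by simp [Equiv.arrowCongr]
  have hprod : (∏ x, ∑' y, g x y) = ∏ i, ∑' y, g (e.symm i) y :=
    Fintype.prod_equiv e _ _ fun x => by simp
  rw [hfun, hprod]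
  exact key

/-- Moment lemma: expectation of `∏_{x ∈ s} 1[f x = y]` under the product distribution. -/
lemma key_moment {X Y : Type*} [Fintype X] (D : Y → ℝ) (hD0 : ∀ y, 0 ≤ D y)
    (hD1 : HasSum D 1) (s : Finset X) (y : Y) :
    HasSum (fun f : X → Y => (∏ x, D (f x)) * ∏ x ∈ s, (if f x = y then (1:ℝ) else 0))
      (D y ^ s.card) := by
  classical
  have hnn : ∀ (x : X) (z : Y), 0 ≤ (if x ∈ s then (if z = y then D z else 0) else D z) := by
    intro x z; split_ifs <;> simp [hD0 z]
  have h := hasSum_pi (fun x z => if x ∈ s then (if z = y then D z else 0) else D z) hnn ?_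
  · have hfun : (fun f : X → Y => ∏ x, (if x ∈ s then (if f x = y then D (f x) else 0) else D (f x)))
        = fun f : X → Y => (∏ x, D (f x)) * ∏ x ∈ s, (if f x = y then (1:ℝ) else 0) := by
      funext f
      have : ∀ x, (if x ∈ s then (if f x = y then D (f x) else 0) else D (f x))
          = D (f x) * (if x ∈ s then (if f x = y then (1:ℝ) else 0) else 1) := by
        intro x; split_ifs <;> simp
      rw [Finset.prod_congr rfl fun x _ => this x, Finset.prod_mul_distrib,
        Finset.prod_ite_mem, Finset.univ_inter]
    have hval : (∏ x, ∑' z, (if x ∈ s then (if z = y then D z else 0) else D z))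
        = D y ^ s.card := by
      have : ∀ x, (∑' z, (if x ∈ s then (if z = y then D z else 0) else D z))
          = if x ∈ s then D y else 1 := by
        intro x
        split
        · have : (fun z => if z = y then D z else 0) = fun z => if z = y then D y else 0 := by
            funext z; split <;> simp_all
          rw [this, tsum_ite_eq]
        · exact hD1.tsum_eq
      rw [Finset.prod_congr rfl fun x _ => this x, Finset.prod_ite_mem, Finset.univ_inter,
        Finset.prod_const]
    rw [hfun, hval] at h
    exact h
  · intro x
    split
    · refine Summable.of_nonneg_of_le (fun z => ?_) (fun z => ?_) hD1.summable
      · split_ifs <;> simp [hD0 z]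
      · split_ifs <;> simp [hD0 z]
    · exact hD1.summable

/-- Cauchy–Schwarz: weighted first absolute moment bounded by sqrt of second moment. -/
lemma cs_bound {ι : Type*} (p z : ι → ℝ) (V : ℝ) (hp : ∀ i, 0 ≤ p i)
    (h1 : HasSum p 1) (h2 : HasSum (fun i => p i * z i ^ 2) V) :
    Summable (fun i => p i * |z i|) ∧ (∑' i, p i * |z i|) ≤ Real.sqrt V := by
  have hsum : Summable (fun i => p i * |z i|) := by
    refine Summable.of_nonneg_of_le (fun i => mul_nonneg (hp i) (abs_nonneg _))
      (fun i => ?_) ((h1.summable.add h2.summable).mul_left (1/2))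
    have h : 2 * |z i| ≤ 1 + z i ^ 2 := by nlinarith [sq_nonneg (|z i| - 1), sq_abs (z i)]
    have := mul_le_mul_of_nonneg_left h (hp i)
    nlinarith
  have hV : 0 ≤ V := h2.tsum_eq ▸ tsum_nonneg fun i => mul_nonneg (hp i) (sq_nonneg _)
  refine ⟨hsum, Summable.tsum_le_of_sum_le hsum fun t => ?_⟩
  rw [Real.le_sqrt (Finset.sum_nonneg fun i _ => mul_nonneg (hp i) (abs_nonneg _)) hV]
  have e1 : (∑ i ∈ t, Real.sqrt (p i) ^ 2) = ∑ i ∈ t, p i :=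
    Finset.sum_congr rfl fun i _ => Real.sq_sqrt (hp i)
  have e2 : (∑ i ∈ t, (Real.sqrt (p i) * |z i|) ^ 2) = ∑ i ∈ t, p i * z i ^ 2 :=
    Finset.sum_congr rfl fun i _ => by rw [mul_pow, Real.sq_sqrt (hp i), sq_abs]
  have l1 : (∑ i ∈ t, p i) ≤ 1 := sum_le_hasSum t (fun i _ => hp i) h1
  have l2 : (∑ i ∈ t, p i * z i ^ 2) ≤ V :=
    sum_le_hasSum t (fun i _ => mul_nonneg (hp i) (sq_nonneg _)) h2
  calc (∑ i ∈ t, p i * |z i|) ^ 2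
      = (∑ i ∈ t, Real.sqrt (p i) * (Real.sqrt (p i) * |z i|)) ^ 2 := by
        congr 1; refine Finset.sum_congr rfl fun i _ => ?_
        rw [← mul_assoc, Real.mul_self_sqrt (hp i)]
    _ ≤ (∑ i ∈ t, Real.sqrt (p i) ^ 2) * ∑ i ∈ t, (Real.sqrt (p i) * |z i|) ^ 2 :=
        Finset.sum_mul_sq_le_sq_mul_sq t _ _
    _ = (∑ i ∈ t, p i) * ∑ i ∈ t, p i * z i ^ 2 := by rw [e1, e2]
    _ ≤ 1 * V := by
        apply mul_le_mul l1 l2 (Finset.sum_nonneg fun i _ => mul_nonneg (hp i) (sq_nonneg _))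
          zero_le_one
    _ = V := one_mul V

section Main

variable {X Y : Type*} [Fintype X] [Nonempty X] [Countable Y]

lemma ind_pair (D : Y → ℝ) (f : X → Y) (y : Y) (x x' : X) :
    (∏ t ∈ ({x, x'} : Finset X), (if f t = y then (1:ℝ) else 0))
      = (if f x = y then (1:ℝ) else 0) * (if f x' = y then (1:ℝ) else 0) := by
  by_cases h : x = x'
  · subst h
    rw [Finset.pair_eq_singleton, Finset.prod_singleton]
    by_cases hf : f x = y <;> simp [hf]
  · rw [Finset.prod_pair h]

lemma card_pair_eq (x x' : X) :
    (({x, x'} : Finset X).card : ℝ) = if x = x' then 1 else 2 := by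
  by_cases h : x = x'
  · subst h; simp
  · rw [Finset.card_insert_of_notMem (by simp [h]), Finset.card_singleton]
    simp [h]

lemma hM1 (D : Y → ℝ) (hD0 : ∀ y, 0 ≤ D y) (hD1 : HasSum D 1) (y : Y) :
    HasSum (fun f : X → Y => (∏ x, D (f x)) * ∑ x, (if f x = y then (1:ℝ) else 0))
      ((Fintype.card X : ℝ) * D y) := by
  have h := hasSum_sum (s := (Finset.univ : Finset X))
    (f := fun (x : X) (f : X → Y) => (∏ t, D (f t)) * (if f x = y then (1:ℝ) else 0))
    (a := fun _ : X => D y)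
    (fun x _ => by simpa using key_moment D hD0 hD1 {x} y)
  have hfun : (fun f : X → Y => ∑ x, (∏ t, D (f t)) * (if f x = y then (1:ℝ) else 0))
      = fun f : X → Y => (∏ x, D (f x)) * ∑ x, (if f x = y then (1:ℝ) else 0) := by
    funext f; rw [Finset.mul_sum]
  have hval : (∑ _x : X, D y) = (Fintype.card X : ℝ) * D y := by
    rw [Finset.sum_const, Finset.card_univ, nsmul_eq_mul]
  rw [hfun, hval] at h
  exact h

lemma hM2 (D : Y → ℝ) (hD0 : ∀ y, 0 ≤ D y) (hD1 : HasSum D 1) (y : Y) :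
    HasSum (fun f : X → Y => (∏ x, D (f x)) * (∑ x, (if f x = y then (1:ℝ) else 0)) ^ 2)
      (∑ q : X × X, D y ^ ({q.1, q.2} : Finset X).card) := by
  have h := hasSum_sum (s := (Finset.univ : Finset (X × X)))
    (f := fun (q : X × X) (f : X → Y) =>
      (∏ t, D (f t)) * ((if f q.1 = y then (1:ℝ) else 0) * (if f q.2 = y then (1:ℝ) else 0)))
    (a := fun q : X × X => D y ^ ({q.1, q.2} : Finset X).card)
    (fun q _ => by
      have := key_moment D hD0 hD1 {q.1, q.2} y
      simpa [ind_pair D] using this)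
  have hfun : (fun f : X → Y => ∑ q : X × X,
      (∏ t, D (f t)) * ((if f q.1 = y then (1:ℝ) else 0) * (if f q.2 = y then (1:ℝ) else 0)))
      = fun f : X → Y => (∏ x, D (f x)) * (∑ x, (if f x = y then (1:ℝ) else 0)) ^ 2 := by
    funext f
    rw [sq, Finset.sum_mul_sum, ← Finset.mul_sum]
    rw [Fintype.sum_prod_type]
  rw [hfun] at h
  exact h

lemma m2_le (D : Y → ℝ) (hD0 : ∀ y, 0 ≤ D y) (y : Y) :
    (∑ q : X × X, D y ^ ({q.1, q.2} : Finset X).card)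
      ≤ (Fintype.card X : ℝ) * D y + (Fintype.card X : ℝ) ^ 2 * D y ^ 2 := by
  classical
  have hterm : ∀ q : X × X, D y ^ ({q.1, q.2} : Finset X).card
      ≤ (if q.1 = q.2 then D y else 0) + D y ^ 2 := by
    rintro ⟨x, x'⟩
    by_cases h : x = x'
    · subst h
      rw [Finset.pair_eq_singleton, Finset.card_singleton, pow_one, if_pos rfl]
      nlinarith [sq_nonneg (D y)]
    · rw [Finset.card_insert_of_notMem (by simp [h]), Finset.card_singleton, if_neg h]
      norm_num
  calc (∑ q : X × X, D y ^ ({q.1, q.2} : Finset X).card)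
      ≤ ∑ q : X × X, ((if q.1 = q.2 then D y else 0) + D y ^ 2) :=
        Finset.sum_le_sum fun q _ => hterm q
    _ = (∑ q : X × X, (if q.1 = q.2 then D y else 0)) + (Fintype.card X : ℝ)^2 * D y ^ 2 := by
        rw [Finset.sum_add_distrib, Finset.sum_const, Finset.card_univ, Fintype.card_prod,
          nsmul_eq_mul]
        push_cast
        ring
    _ = (Fintype.card X : ℝ) * D y + (Fintype.card X : ℝ)^2 * D y ^ 2 := by
        congr 1
        rw [Fintype.sum_prod_type]
        have : ∀ x : X, (∑ x' : X, (if x = x' then D y else 0)) = D y := by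
          intro x
          rw [Finset.sum_ite_eq]
          simp
        rw [Finset.sum_congr rfl fun x _ => this x, Finset.sum_const, Finset.card_univ,
          nsmul_eq_mul]

end Main

section Main2

variable {X Y : Type*} [Fintype X] [Nonempty X] [Countable Y]

lemma per_y_bound (D : Y → ℝ) (hD0 : ∀ y, 0 ≤ D y) (hD1 : HasSum D 1) (y : Y) :
    Summable (fun f : X → Y =>
      (∏ x, D (f x)) * |D y - (∑ x, (if f x = y then (1:ℝ) else 0)) / (Fintype.card X : ℝ)|) ∧
    (∑' f : X → Y,
      (∏ x, D (f x)) * |D y - (∑ x, (if f x = y then (1:ℝ) else 0)) / (Fintype.card X : ℝ)|)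
      ≤ Real.sqrt (D y) / Real.sqrt (Fintype.card X : ℝ) := by
  classical
  set N : ℝ := (Fintype.card X : ℝ) with hN
  have hNpos : (0:ℝ) < N := by
    rw [hN]; exact_mod_cast Fintype.card_pos
  have hNne : N ≠ 0 := ne_of_gt hNpos
  have hPnn : ∀ f : X → Y, 0 ≤ ∏ x, D (f x) := fun f => Finset.prod_nonneg fun x _ => hD0 _
  have hP1 : HasSum (fun f : X → Y => ∏ x, D (f x)) 1 := by
    have := hasSum_pi (fun _ : X => D) (fun _ z => hD0 z) (fun _ => hD1.summable)
    simpa [hD1.tsum_eq] using this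
  set m2 : ℝ := ∑ q : X × X, D y ^ ({q.1, q.2} : Finset X).card with hm2
  -- second moment of the deviation
  have hsq2 : HasSum (fun f : X → Y =>
      (∏ x, D (f x)) * (D y - (∑ x, (if f x = y then (1:ℝ) else 0)) / N) ^ 2)
      (D y ^ 2 - 2 * (D y / N) * (N * D y) + (1 / N ^ 2) * m2) := by
    have h := ((hP1.mul_right (D y ^ 2)).sub ((hM1 D hD0 hD1 y).mul_left (2 * (D y / N)))).add
      ((hM2 D hD0 hD1 y).mul_left (1 / N ^ 2))
    have hfun : (fun f : X → Y =>
        ((∏ x, D (f x)) * D y ^ 2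
          - 2 * (D y / N) * ((∏ x, D (f x)) * ∑ x, (if f x = y then (1:ℝ) else 0)))
          + 1 / N ^ 2 * ((∏ x, D (f x)) * (∑ x, (if f x = y then (1:ℝ) else 0)) ^ 2))
        = fun f : X → Y =>
          (∏ x, D (f x)) * (D y - (∑ x, (if f x = y then (1:ℝ) else 0)) / N) ^ 2 := by
      funext f
      field_simp
      ring
    rw [hfun, one_mul, ← hN, ← hm2] at h
    exact h
  have hVle : D y ^ 2 - 2 * (D y / N) * (N * D y) + (1 / N ^ 2) * m2 ≤ D y / N := by
    have hb := m2_le (X := X) D hD0 y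
    rw [← hN] at hb
    have e1 : 2 * (D y / N) * (N * D y) = 2 * D y ^ 2 := by field_simp
    have e2 : (1 / N ^ 2) * (N * D y + N ^ 2 * D y ^ 2) = D y / N + D y ^ 2 := by
      field_simp
    have e3 : (1 / N ^ 2) * m2 ≤ D y / N + D y ^ 2 := by
      rw [← e2]
      exact mul_le_mul_of_nonneg_left hb (by positivity)
    linarith
  have hcs := cs_bound (fun f : X → Y => ∏ x, D (f x))
    (fun f : X → Y => D y - (∑ x, (if f x = y then (1:ℝ) else 0)) / N)
    _ hPnn hP1 hsq2
  refine ⟨hcs.1, hcs.2.trans ?_⟩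
  calc Real.sqrt (D y ^ 2 - 2 * (D y / N) * (N * D y) + (1 / N ^ 2) * m2)
      ≤ Real.sqrt (D y / N) := Real.sqrt_le_sqrt hVle
    _ = Real.sqrt (D y) / Real.sqrt N := Real.sqrt_div (hD0 y) N

lemma main_bound (D : Y → ℝ) (hD0 : ∀ y, 0 ≤ D y) (hD1 : HasSum D 1)
    (hsq : Summable fun y => Real.sqrt (D y)) :
    (∑' p : (X → Y) × Y,
        |(∏ x, D (p.1 x)) * D p.2 -
          (∏ x, D (p.1 x)) *
            (((Finset.univ.filter fun x => p.1 x = p.2).card : ℝ) / (Fintype.card X : ℝ))|)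
      ≤ (∑' y, Real.sqrt (D y)) / Real.sqrt (Fintype.card X : ℝ) := by
  classical
  set N : ℝ := (Fintype.card X : ℝ) with hN
  have hNpos : (0:ℝ) < N := by
    rw [hN]; exact_mod_cast Fintype.card_pos
  have hPnn : ∀ f : X → Y, 0 ≤ ∏ x, D (f x) := fun f => Finset.prod_nonneg fun x _ => hD0 _
  -- the function on the swapped product
  set G : Y × (X → Y) → ℝ := fun q =>
    (∏ x, D (q.2 x)) * |D q.1 - (∑ x, (if q.2 x = q.1 then (1:ℝ) else 0)) / N| with hG
  have hGnn : ∀ q, 0 ≤ G q := fun q => mul_nonneg (hPnn _) (abs_nonneg _)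
  have hG1 : ∀ y : Y, Summable fun f : X → Y => G (y, f) := fun y => (per_y_bound D hD0 hD1 y).1
  have hybnd : ∀ y : Y, (∑' f : X → Y, G (y, f)) ≤ Real.sqrt (D y) / Real.sqrt N := fun y =>
    (per_y_bound D hD0 hD1 y).2
  have hG2 : Summable fun y : Y => ∑' f : X → Y, G (y, f) := by
    refine Summable.of_nonneg_of_le
      (fun y => tsum_nonneg fun f => hGnn (y, f)) hybnd (hsq.div_const _)
  have hGsum : Summable G := (summable_prod_of_nonneg hGnn).2 ⟨hG1, hG2⟩
  -- rewrite the LHS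
  have hterm : ∀ p : (X → Y) × Y,
      |(∏ x, D (p.1 x)) * D p.2 -
        (∏ x, D (p.1 x)) *
          (((Finset.univ.filter fun x => p.1 x = p.2).card : ℝ) / N)| = G (p.2, p.1) := by
    rintro ⟨f, y⟩
    have hcard : ((Finset.univ.filter fun x => f x = y).card : ℝ)
        = ∑ x, (if f x = y then (1:ℝ) else 0) := by
      rw [Finset.card_filter]
      push_cast
      rfl
    rw [hG]
    dsimp only
    rw [hcard, ← mul_sub, abs_mul, abs_of_nonneg (hPnn f)]
  calc (∑' p : (X → Y) × Y,
        |(∏ x, D (p.1 x)) * D p.2 -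
          (∏ x, D (p.1 x)) *
            (((Finset.univ.filter fun x => p.1 x = p.2).card : ℝ) / N)|)
      = ∑' p : (X → Y) × Y, G (p.2, p.1) := tsum_congr hterm
    _ = ∑' q : Y × (X → Y), G q := Equiv.tsum_eq (Equiv.prodComm (X → Y) Y) G
    _ = ∑' y : Y, ∑' f : X → Y, G (y, f) := Summable.tsum_prod' hGsum hG1
    _ ≤ ∑' y : Y, Real.sqrt (D y) / Real.sqrt N := Summable.tsum_le_tsum hybnd hG2 (hsq.div_const _)
    _ = (∑' y, Real.sqrt (D y)) / Real.sqrt N := tsum_div_const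

end Main2

theorem stmt2 {X Y : Type*} [Fintype X] [Nonempty X] [Countable Y]
    (D : Y → ℝ) (hD0 : ∀ y, 0 ≤ D y) (hD1 : HasSum D 1)
    (hsq : Summable fun y => Real.sqrt (D y)) :
    (1 / 2 : ℝ) * (∑' p : (X → Y) × Y,
        |(∏ x, D (p.1 x)) * D p.2 -
          (∏ x, D (p.1 x)) *
            (((Finset.univ.filter fun x => p.1 x = p.2).card : ℝ) / (Fintype.card X : ℝ))|)
      ≤ (1 / (2 * Real.sqrt (Fintype.card X))) *
          (2 : ℝ) ^ ((2 * Real.logb 2 (∑' y, Real.sqrt (D y))) / 2)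
    ∧ (Finite Y →
        (1 / 2 : ℝ) * (∑' p : (X → Y) × Y,
            |(∏ x, D (p.1 x)) * D p.2 -
              (∏ x, D (p.1 x)) *
                (((Finset.univ.filter fun x => p.1 x = p.2).card : ℝ) /
                  (Fintype.card X : ℝ))|)
          ≤ (1 / 2) * Real.sqrt ((Nat.card Y : ℝ) / (Fintype.card X : ℝ))) := by
  classical
  have hNpos : (0:ℝ) < (Fintype.card X : ℝ) := by exact_mod_cast Fintype.card_pos
  have hsN : (0:ℝ) < Real.sqrt (Fintype.card X : ℝ) := Real.sqrt_pos.2 hNpos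
  have key := main_bound (X := X) D hD0 hD1 hsq
  have hS0nn : 0 ≤ ∑' y, Real.sqrt (D y) := tsum_nonneg fun y => Real.sqrt_nonneg _
  have hS0pos : 0 < ∑' y, Real.sqrt (D y) := by
    obtain ⟨y0, hy0⟩ : ∃ y, 0 < D y := by
      by_contra h
      push_neg at h
      have hzero : D = fun _ => 0 := funext fun y => le_antisymm (h y) (hD0 y)
      rw [hzero] at hD1
      exact (one_ne_zero : (1:ℝ) ≠ 0) (hD1.unique hasSum_zero)
    exact lt_of_lt_of_le (Real.sqrt_pos.2 hy0) (Summable.le_tsum hsq y0 fun _ _ => Real.sqrt_nonneg _)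
  have half := mul_le_mul_of_nonneg_left key (by norm_num : (0:ℝ) ≤ 1/2)
  constructor
  · have hrpow : (2:ℝ) ^ ((2 * Real.logb 2 (∑' y, Real.sqrt (D y))) / 2)
        = ∑' y, Real.sqrt (D y) := by
      rw [mul_div_cancel_left₀ _ (two_ne_zero)]
      exact Real.rpow_logb two_pos (by norm_num) hS0pos
    rw [hrpow]
    have heq : (1 / (2 * Real.sqrt (Fintype.card X : ℝ))) * (∑' y, Real.sqrt (D y))
        = (1/2 : ℝ) * ((∑' y, Real.sqrt (D y)) / Real.sqrt (Fintype.card X : ℝ)) := by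
      field_simp
    rw [heq]
    exact half
  · intro hfin
    haveI := Fintype.ofFinite Y
    have hcard : (Nat.card Y : ℝ) = (Fintype.card Y : ℝ) := by rw [Nat.card_eq_fintype_card]
    have hsum1 : (∑ y : Y, D y) = 1 := (hasSum_fintype D).unique hD1
    have hS0le : (∑' y, Real.sqrt (D y)) ≤ Real.sqrt (Fintype.card Y : ℝ) := by
      rw [tsum_fintype]
      rw [Real.le_sqrt (Finset.sum_nonneg fun y _ => Real.sqrt_nonneg _) (Nat.cast_nonneg _)]
      calc (∑ y : Y, Real.sqrt (D y)) ^ 2 = (∑ y : Y, 1 * Real.sqrt (D y)) ^ 2 := by simp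
        _ ≤ (∑ _y : Y, (1:ℝ)^2) * ∑ y : Y, Real.sqrt (D y)^2 :=
            Finset.sum_mul_sq_le_sq_mul_sq _ _ _
        _ = (Fintype.card Y : ℝ) * ∑ y : Y, D y := by
            rw [Finset.sum_congr rfl fun y _ => Real.sq_sqrt (hD0 y)]
            simp [Finset.card_univ]
        _ = (Fintype.card Y : ℝ) := by rw [hsum1, mul_one]
    refine half.trans ?_
    have : (∑' y, Real.sqrt (D y)) / Real.sqrt (Fintype.card X : ℝ)
        ≤ Real.sqrt ((Nat.card Y : ℝ) / (Fintype.card X : ℝ)) := by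
      rw [Real.sqrt_div (by positivity) _, hcard]
      gcongr
    exact mul_le_mul_of_nonneg_left this (by norm_num)
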